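/- Let q ≥ 2 and N ≥ s ≥ 1 be integers and let p ∈ Σ^N. If 2·e·s·N ≤ q^s (where e is Euler's number), then |O_p| ≥ q^N · exp(−N/(2s)). -/

import Mathlib

/-- The length-`s` window of the string `x` at location `i`. -/
def win {α : Type*} (x : List α) (i s : ℕ) : List α := (x.drop i).take s

/-- `x ⊥ₛ y`: no length-`s` window of `x` equals a length-`s` window of `y`. -/
def perp {α : Type*} (s : ℕ) (x y : List α) : Prop :=
  ∀ i j, i + s ≤ x.length → j + s ≤ y.length → win x i s ≠ win y j s

/-- `O_p`: the set of strings of length `N` over `ZMod q` all of whose length-`s` windows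
differ from every length-`s` window of `p`. -/
def Op (q N s : ℕ) (p : List (ZMod q)) : Set (List (ZMod q)) :=
  {c | c.length = N ∧ perp s c p}

section Aux

variable {α : Type*} [Fintype α] [DecidableEq α]

/-- All strings of length `n` over `α`. -/
def strs (α : Type*) [Fintype α] [DecidableEq α] : ℕ → Finset (List α)
  | 0 => {[]}
  | n+1 => ((Finset.univ : Finset α) ×ˢ strs α n).image fun x => x.1 :: x.2

lemma mem_strs {n : ℕ} {c : List α} : c ∈ strs α n ↔ c.length = n := by
  induction n generalizing c with
  | zero => simp [strs, List.length_eq_zero_iff]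
  | succ n ih =>
    simp only [strs, Finset.mem_image, Finset.mem_product, Finset.mem_univ, true_and]
    constructor
    · rintro ⟨⟨a, l⟩, hl, rfl⟩
      simpa using ih.mp hl
    · intro hlen
      match c, hlen with
      | a :: l, hlen => exact ⟨(a, l), ih.mpr (by simpa using hlen), rfl⟩

lemma card_strs (n : ℕ) : (strs α n).card = (Fintype.card α) ^ n := by
  induction n with
  | zero => simp [strs]
  | succ n ih =>
    rw [strs, Finset.card_image_of_injective _ (fun x y hxy => by
      simp only [List.cons.injEq] at hxy
      exact Prod.ext hxy.1 hxy.2 : Function.Injective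
        (fun x : α × List α => x.1 :: x.2)), Finset.card_product, Finset.card_univ, ih]
    ring

lemma win_take {x : List α} {i s k : ℕ} (h : i + s ≤ k) : win (x.take k) i s = win x i s := by
  unfold win
  rw [List.drop_take, List.take_take]
  congr 1
  omega

lemma perp_take {s k : ℕ} {x y : List α} (h : perp s x y) : perp s (x.take k) y := by
  intro i j hi hj
  rw [List.length_take] at hi
  rw [win_take (by omega)]
  exact h i j (by omega) hj

open scoped Classical in
/-- Good strings of length `n`: those perpendicular to `p`. -/
noncomputable def goodF (α : Type*) [Fintype α] [DecidableEq α] (p : List α) (s n : ℕ) :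
    Finset (List α) :=
  (strs α n).filter (fun c => perp s c p)

lemma mem_goodF {p : List α} {s n : ℕ} {c : List α} :
    c ∈ goodF α p s n ↔ c.length = n ∧ perp s c p := by
  classical
  simp [goodF, mem_strs]

lemma goodF_small {p : List α} {s n : ℕ} (h : n < s) : goodF α p s n = strs α n := by
  classical
  apply Finset.filter_true_of_mem
  intro c hc i j hi _
  rw [mem_strs] at hc
  omega

/-- The key recurrence: `q * f n ≤ f (n+1) + (p.length - s + 1) * f (n+1-s)`. -/
lemma step (p : List α) (s n : ℕ) (hs1 : 1 ≤ s) (hsn : s ≤ n + 1) (hsp : s ≤ p.length) :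
    Fintype.card α * (goodF α p s n).card ≤
      (goodF α p s (n+1)).card + (p.length - s + 1) * (goodF α p s (n+1-s)).card := by
  classical
  set A : Finset (List α) :=
    ((Finset.univ : Finset α) ×ˢ goodF α p s n).image (fun x => x.2 ++ [x.1]) with hA
  set B : Finset (List α) :=
    (strs α (n+1)).filter (fun c => perp s (c.take n) p ∧ ¬ perp s c p) with hB
  have cardA : A.card = Fintype.card α * (goodF α p s n).card := by
    rw [hA, Finset.card_image_of_injective, Finset.card_product, Finset.card_univ]
    rintro ⟨a, l⟩ ⟨b, m⟩ hxy
    simp only at hxy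
    obtain ⟨h2, h1⟩ := List.append_inj' hxy rfl
    simp only [List.cons.injEq] at h1
    exact Prod.ext h1.1 h2
  have hAsub : A ⊆ goodF α p s (n+1) ∪ B := by
    rintro c hc
    rw [hA, Finset.mem_image] at hc
    obtain ⟨⟨a, l⟩, hl, rfl⟩ := hc
    simp only [Finset.mem_product, Finset.mem_univ, true_and] at hl
    rw [mem_goodF] at hl
    have hlen : (l ++ [a]).length = n + 1 := by simp [hl.1]
    have htake : (l ++ [a]).take n = l := by
      rw [← hl.1]; exact List.take_left
    by_cases hgood : perp s (l ++ [a]) p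
    · exact Finset.mem_union_left _ (mem_goodF.mpr ⟨hlen, hgood⟩)
    · refine Finset.mem_union_right _ ?_
      rw [hB, Finset.mem_filter, mem_strs]
      exact ⟨hlen, by rw [htake]; exact hl.2, hgood⟩
  have cardB : B.card ≤ (p.length - s + 1) * (goodF α p s (n+1-s)).card := by
    set F : Finset (List α) := (Finset.range (p.length - s + 1)).image (fun j => win p j s)
      with hF
    have hFcard : F.card ≤ p.length - s + 1 := by
      apply le_trans (Finset.card_image_le) (by simp)
    calc B.card ≤ (F ×ˢ goodF α p s (n+1-s)).card := by
          apply Finset.card_le_card_of_injOn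
            (fun c => (win c (n+1-s) s, c.take (n+1-s)))
          · intro c hc
            rw [hB, Finset.mem_coe, Finset.mem_filter, mem_strs] at hc
            obtain ⟨hlen, hptake, hbad⟩ := hc
            -- find the offending window; it must be the last one
            rw [perp] at hbad
            push_neg at hbad
            obtain ⟨i, j, hi, hj, hw⟩ := hbad
            have hin : i = n + 1 - s := by
              by_contra hne
              have hi' : i + s ≤ n := by omega
              have := hptake i j (by rw [List.length_take]; omega) hj
              rw [win_take hi'] at this
              exact this hw
            rw [Finset.mem_coe, Finset.mem_product]
            constructor
            · rw [hF, Finset.mem_image]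
              exact ⟨j, by rw [Finset.mem_range]; omega, by rw [← hw, hin]⟩
            · rw [mem_goodF]
              constructor
              · rw [List.length_take]; omega
              · have : c.take (n+1-s) = (c.take n).take (n+1-s) := by
                  rw [List.take_take]; congr 1; omega
                dsimp only; rw [this]
                exact perp_take hptake
          · intro c hc c' hc' hcc
            simp only [Finset.mem_coe] at hc hc'
            rw [hB, Finset.mem_filter, mem_strs] at hc hc'
            simp only [Prod.mk.injEq] at hcc
            have hrec : ∀ d : List α, d.length = n + 1 →
                d = d.take (n+1-s) ++ win d (n+1-s) s := by
              intro d hd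
              have : win d (n+1-s) s = d.drop (n+1-s) := by
                unfold win
                apply List.take_of_length_le
                rw [List.length_drop]; omega
              rw [this, List.take_append_drop]
            rw [hrec c hc.1, hrec c' hc'.1, hcc.1, hcc.2]
      _ ≤ (p.length - s + 1) * (goodF α p s (n+1-s)).card := by
          rw [Finset.card_product]
          exact Nat.mul_le_mul_right _ hFcard
  calc Fintype.card α * (goodF α p s n).card = A.card := cardA.symm
    _ ≤ (goodF α p s (n+1) ∪ B).card := Finset.card_le_card hAsub
    _ ≤ (goodF α p s (n+1)).card + B.card := Finset.card_union_le _ _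
    _ ≤ _ := by exact Nat.add_le_add_left cardB _

end Aux

/-- Chaining a per-step lower bound. -/
lemma chain_bound (f : ℕ → ℝ) (r : ℝ) (hr : 0 ≤ r) (a : ℕ) (hf : 0 ≤ f a) :
    ∀ t : ℕ, (∀ k, a ≤ k → k < a + t → r * f k ≤ f (k+1)) → r ^ t * f a ≤ f (a + t) := by
  intro t
  induction t with
  | zero => simp
  | succ t ih =>
    intro hstep
    have h1 : r ^ t * f a ≤ f (a + t) := ih (fun k hk hk' => hstep k hk (by omega))
    calc r ^ (t+1) * f a = r * (r ^ t * f a) := by ring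
      _ ≤ r * f (a + t) := by
          apply mul_le_mul_of_nonneg_left h1 hr
      _ ≤ f (a + t + 1) := hstep (a + t) (by omega) (by omega)

/-- (Lovász-local-lemma estimate) If `2·e·s·N ≤ q^s` then `|O_p| ≥ q^N · exp(−N/(2s))`. -/
theorem stmt8 (q N s : ℕ) (hq : 2 ≤ q) (hs : 1 ≤ s) (hsN : s ≤ N)
    (p : List (ZMod q)) (hp : p.length = N)
    (h : 2 * Real.exp 1 * (s : ℝ) * (N : ℝ) ≤ (q : ℝ) ^ s) :
    (q : ℝ) ^ N * Real.exp (-(N : ℝ) / (2 * s)) ≤ ((Op q N s p).ncard : ℝ) := by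
  haveI : NeZero q := ⟨by omega⟩
  have hcardα : Fintype.card (ZMod q) = q := ZMod.card q
  set f : ℕ → ℝ := fun n => ((goodF (ZMod q) p s n).card : ℝ) with hfdef
  have hf_nonneg : ∀ n, 0 ≤ f n := fun n => Nat.cast_nonneg _
  have hS : (1 : ℝ) ≤ (s : ℝ) := by exact_mod_cast hs
  have hSpos : (0 : ℝ) < (s : ℝ) := by linarith
  have hqR : (2 : ℝ) ≤ (q : ℝ) := by exact_mod_cast hq
  have hNpos : (1 : ℝ) ≤ (N : ℝ) := by exact_mod_cast (by omega : 1 ≤ N)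
  set β : ℝ := 2 * s / (2 * s + 1) with hβ
  have hβpos : 0 < β := by positivity
  have hβlt : β ≤ 1 := by
    rw [hβ, div_le_one (by positivity)]; linarith
  -- β ≥ exp(-1/(2s))
  have hβexp : Real.exp (-(1 / (2 * (s:ℝ)))) ≤ β := by
    have h2 : β⁻¹ = 1 + 1 / (2 * (s:ℝ)) := by
      rw [hβ]; rw [inv_div]; field_simp
    rw [Real.exp_neg, inv_le_comm₀ (Real.exp_pos _) hβpos, h2]
    have := Real.add_one_le_exp (1 / (2 * (s:ℝ)))
    linarith
  -- key inequality (I): N ≤ (1-β) * β^(s-1) * q^s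
  have hI : (N : ℝ) ≤ (1 - β) * β ^ (s - 1) * (q:ℝ) ^ s := by
    have hβs : Real.exp (-1) ≤ β ^ s := by
      calc Real.exp (-1) ≤ Real.exp (-(1/(2*(s:ℝ)))) ^ s := by
            rw [← Real.exp_nat_mul]
            apply Real.exp_le_exp.mpr
            rw [mul_neg]
            have : (s:ℝ) * (1/(2*(s:ℝ))) = 1/2 := by field_simp
            rw [this]; norm_num
        _ ≤ β ^ s := by
            apply pow_le_pow_left₀ (Real.exp_pos _).le hβexp
    have h1β : 1 - β = 1 / (2 * (s:ℝ) + 1) := by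
      rw [hβ]; field_simp; ring
    have hβsplit : β ^ s = β ^ (s-1) * β := by
      conv_lhs => rw [show s = (s-1) + 1 by omega]
      rw [pow_succ]
    have key : Real.exp 1 * β ^ s * (N:ℝ) ≤ (1 - β) * β ^ (s - 1) * (q:ℝ)^s := by
      calc Real.exp 1 * β ^ s * (N:ℝ)
          = (1 - β) * β ^ (s-1) * (2 * Real.exp 1 * s * N) := by
            rw [hβsplit, h1β, hβ]; field_simp
        _ ≤ (1 - β) * β ^ (s - 1) * (q:ℝ)^s := by
            apply mul_le_mul_of_nonneg_left h
            have : 0 ≤ 1 - β := by linarith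
            positivity
    have : (N:ℝ) = Real.exp 1 * Real.exp (-1) * N := by
      rw [← Real.exp_add]; simp
    rw [this]
    calc Real.exp 1 * Real.exp (-1) * (N:ℝ) ≤ Real.exp 1 * β ^ s * N := by
          apply mul_le_mul_of_nonneg_right _ (by positivity)
          exact mul_le_mul_of_nonneg_left hβs (Real.exp_pos _).le
      _ ≤ _ := key
  -- small-length values
  have hsmall : ∀ n, n < s → f n = (q:ℝ) ^ n := by
    intro n hn
    rw [hfdef]
    simp only
    rw [goodF_small hn, card_strs, hcardα]
    push_cast
    ring
  -- the recurrence, cast to ℝ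
  have hrec : ∀ n, s ≤ n + 1 →
      (q:ℝ) * f n ≤ f (n+1) + (N:ℝ) * f (n+1-s) := by
    intro n hn
    have hstep := step p s n hs hn (by omega)
    rw [hcardα] at hstep
    have hnat : q * (goodF (ZMod q) p s n).card ≤
        (goodF (ZMod q) p s (n+1)).card + N * (goodF (ZMod q) p s (n+1-s)).card := by
      have hm : (p.length - s + 1) * (goodF (ZMod q) p s (n+1-s)).card ≤
          N * (goodF (ZMod q) p s (n+1-s)).card :=
        Nat.mul_le_mul_right _ (by omega)
      omega
    simp only [hfdef]
    exact_mod_cast hnat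
  -- the main induction: β q f n ≤ f (n+1) for all n
  have key : ∀ n, β * q * f n ≤ f (n+1) := by
    intro n
    induction n using Nat.strong_induction_on with
    | _ n ih =>
      by_cases hcase : n + 1 < s
      · rw [hsmall n (by omega), hsmall (n+1) hcase]
        have : (q:ℝ)^(n+1) = q * (q:ℝ)^n := by ring
        rw [this]
        apply mul_le_mul_of_nonneg_right _ (by positivity)
        nlinarith
      · push_neg at hcase
        have hch : (β * q) ^ (s-1) * f (n+1-s) ≤ f n := by
          have := chain_bound f (β * q) (by positivity) (n+1-s) (hf_nonneg _) (s-1)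
            (fun k hk hk' => ih k (by omega))
          have harith : n + 1 - s + (s - 1) = n := by omega
          rwa [harith] at this
        have hrecn := hrec n hcase
        -- N * f(n+1-s) ≤ (1-β) * q * f n
        have hNle : (N:ℝ) * f (n+1-s) ≤ (1 - β) * (q:ℝ) * f n := by
          calc (N:ℝ) * f (n+1-s) ≤ ((1 - β) * β ^ (s - 1) * (q:ℝ) ^ s) * f (n+1-s) := by
                apply mul_le_mul_of_nonneg_right hI (hf_nonneg _)
            _ = (1 - β) * (q:ℝ) * ((β * q) ^ (s-1) * f (n+1-s)) := by
                rw [mul_pow]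
                have : (q:ℝ) ^ s = (q:ℝ)^(s-1) * q := by
                  conv_lhs => rw [show s = (s-1)+1 by omega]
                  rw [pow_succ]
                rw [this]; ring
            _ ≤ (1 - β) * (q:ℝ) * f n := by
                apply mul_le_mul_of_nonneg_left hch
                have h1 : 0 ≤ 1 - β := by linarith
                positivity
        nlinarith [hf_nonneg n, hf_nonneg (n+1), hf_nonneg (n+1-s)]
  -- conclude: f N ≥ (β q)^N
  have hfN : (β * q) ^ N * 1 ≤ f N := by
    have hf0 : f 0 = 1 := by rw [hsmall 0 (by omega)]; norm_num
    have := chain_bound f (β * q) (by positivity) 0 (by rw [hf0]; norm_num) N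
      (fun k _ _ => key k)
    rw [hf0] at this
    simpa using this
  -- final estimate
  have hβN : Real.exp (-(N:ℝ) / (2 * s)) ≤ β ^ N := by
    calc Real.exp (-(N:ℝ) / (2 * s)) = Real.exp (-(1/(2*(s:ℝ)))) ^ N := by
          rw [← Real.exp_nat_mul]
          congr 1
          field_simp
      _ ≤ β ^ N := pow_le_pow_left₀ (Real.exp_pos _).le hβexp _
  have hOp : Op q N s p = ↑(goodF (ZMod q) p s N) := by
    ext c
    simp only [Op, Set.mem_setOf_eq, Finset.coe_filter, mem_goodF]
    rw [Finset.mem_coe, mem_goodF]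
  rw [hOp, Set.ncard_coe_finset]
  calc (q:ℝ)^N * Real.exp (-(N:ℝ)/(2*s)) ≤ (q:ℝ)^N * β^N := by
        apply mul_le_mul_of_nonneg_left hβN (by positivity)
    _ = (β * q)^N * 1 := by rw [mul_pow]; ring
    _ ≤ f N := hfN
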